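/- For every real x ≥ 0, Σ_{n=2}^∞ Γ(n/2) x^n / (n−1)! = √π · x · ( e^{x²/4} (1 + erf(x/2)) − 1 ). -/

import Mathlib

open Real

/-- The error function `erf(x) = (2/√π) ∫₀ˣ exp(−t²) dt`. -/
noncomputable def erf (x : ℝ) : ℝ :=
  (2 / Real.sqrt Real.pi) * ∫ t in (0:ℝ)..x, Real.exp (-t ^ 2)

namespace GammaErfAux

/-- The coefficient `4^m m! / (2m+1)!`. -/
noncomputable def c (m : ℕ) : ℝ :=
  4 ^ m * (Nat.factorial m : ℝ) / (Nat.factorial (2 * m + 1) : ℝ)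

/-- The coefficient `4^m m! / (2m)!`. -/
noncomputable def d (m : ℕ) : ℝ :=
  4 ^ m * (Nat.factorial m : ℝ) / (Nat.factorial (2 * m) : ℝ)

lemma factorial_sq_le (m : ℕ) :
    Nat.factorial m * Nat.factorial m ≤ Nat.factorial (2 * m) := by
  have := Nat.factorial_mul_factorial_dvd_factorial_add m m
  have h := Nat.le_of_dvd (Nat.factorial_pos _) this
  simpa [two_mul] using h

lemma d_le (m : ℕ) : d m ≤ 4 ^ m / (Nat.factorial m : ℝ) := by
  rw [d, div_le_div_iff₀ (by positivity) (by positivity)]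
  have h : ((Nat.factorial m : ℝ)) * (Nat.factorial m : ℝ) ≤ (Nat.factorial (2 * m) : ℝ) := by
    exact_mod_cast factorial_sq_le m
  nlinarith [pow_pos (show (0:ℝ) < 4 by norm_num) m, h,
    mul_le_mul_of_nonneg_left h (le_of_lt (pow_pos (show (0:ℝ) < 4 by norm_num) m))]

lemma c_mul (m : ℕ) : c m * (2 * (m : ℝ) + 1) = d m := by
  have h : ((Nat.factorial (2 * m + 1) : ℝ)) = (2 * (m:ℝ) + 1) * (Nat.factorial (2 * m) : ℝ) := by
    rw [Nat.factorial_succ]; push_cast; ring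
  rw [c, d, h]
  have h1 : (0:ℝ) < 2 * (m:ℝ) + 1 := by positivity
  have h2 : (0:ℝ) < (Nat.factorial (2 * m) : ℝ) := by positivity
  field_simp

lemma d_succ (m : ℕ) : d (m + 1) = 2 * c m := by
  have h2 : 2 * (m + 1) = (2 * m + 1) + 1 := by ring
  rw [d, c, h2, Nat.factorial_succ (2*m+1), Nat.factorial_succ m]
  have h1 : (0:ℝ) < (Nat.factorial (2 * m + 1) : ℝ) := by positivity
  push_cast
  field_simp
  ring

lemma term_bound (m : ℕ) {R y : ℝ} (hy : |y| ≤ R) :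
    ‖c m * ((2 * (m:ℝ) + 1) * y ^ (2 * m))‖ ≤ (4 * R ^ 2) ^ m / (Nat.factorial m : ℝ) := by
  have hR : 0 ≤ R := le_trans (abs_nonneg y) hy
  have h1 : c m * ((2 * (m:ℝ) + 1) * y ^ (2 * m)) = d m * y ^ (2 * m) := by
    rw [← c_mul m]; ring
  rw [h1]
  have hd : 0 ≤ d m := by rw [d]; positivity
  rw [norm_mul, Real.norm_eq_abs, Real.norm_eq_abs, abs_of_nonneg hd, abs_pow]
  have hdle := d_le m
  have hyp : |y| ^ (2 * m) ≤ R ^ (2 * m) := pow_le_pow_left₀ (abs_nonneg y) hy _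
  calc d m * |y| ^ (2 * m) ≤ (4 ^ m / (Nat.factorial m : ℝ)) * R ^ (2 * m) :=
        mul_le_mul hdle hyp (by positivity) (by positivity)
    _ = (4 * R ^ 2) ^ m / (Nat.factorial m : ℝ) := by
        rw [mul_pow, pow_mul]; ring

/-- The function `g(y) = ∑ 4^m m!/(2m+1)! · y^(2m+1)`, equal to `e^{y²} ∫₀^y e^{-t²}`. -/
noncomputable def g (y : ℝ) : ℝ := ∑' m : ℕ, c m * y ^ (2 * m + 1)

lemma summable_u (R : ℝ) : Summable (fun m : ℕ => (4 * R ^ 2) ^ m / (Nat.factorial m : ℝ)) :=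
  Real.summable_pow_div_factorial (4 * R ^ 2)

lemma summable_g_terms (y : ℝ) : Summable (fun m : ℕ => c m * y ^ (2 * m + 1)) := by
  apply Summable.of_norm
  apply Summable.of_nonneg_of_le (fun m => norm_nonneg _)
    (fun m => ?_) ((summable_u (|y|)).mul_left |y|)
  have hpos : (0:ℝ) < 2 * (m:ℝ) + 1 := by positivity
  have h1 : c m * y ^ (2 * m + 1) = (c m * ((2*(m:ℝ)+1) * y ^ (2*m))) * y / (2*(m:ℝ)+1) := by
    field_simp
    ring
  have hb := term_bound m (le_refl |y|)
  calc ‖c m * y ^ (2 * m + 1)‖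
      = ‖c m * ((2*(m:ℝ)+1) * y ^ (2*m))‖ * |y| / (2*(m:ℝ)+1) := by
        rw [h1, norm_div, norm_mul, Real.norm_eq_abs y, Real.norm_eq_abs (2*(m:ℝ)+1),
          abs_of_pos hpos]
    _ ≤ ‖c m * ((2*(m:ℝ)+1) * y ^ (2*m))‖ * |y| := by
        apply div_le_self (by positivity)
        linarith [hpos]
    _ ≤ (4 * |y| ^ 2) ^ m / (Nat.factorial m : ℝ) * |y| := by gcongr
    _ = |y| * ((4 * |y| ^ 2) ^ m / (Nat.factorial m : ℝ)) := by ring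

lemma summable_d_terms (y : ℝ) : Summable (fun m : ℕ => c m * ((2*(m:ℝ)+1) * y ^ (2*m))) := by
  apply Summable.of_norm
  exact Summable.of_nonneg_of_le (fun m => norm_nonneg _)
    (fun m => term_bound m (le_refl |y|)) (summable_u (|y|))

lemma g_zero : g 0 = 0 := by
  rw [g]; simp

lemma g_hasDerivAt (y : ℝ) : HasDerivAt g (1 + 2 * y * g y) y := by
  have hyR : |y| < |y| + 1 := by linarith
  have hmem : y ∈ Metric.ball (0:ℝ) (|y| + 1) := by
    simpa [Real.dist_eq] using hyR
  have h0mem : (0:ℝ) ∈ Metric.ball (0:ℝ) (|y| + 1) := by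
    simp [Real.dist_eq]
    positivity
  have key : HasDerivAt (fun z => ∑' m : ℕ, c m * z ^ (2*m+1))
      (∑' m : ℕ, c m * ((2*(m:ℝ)+1) * y ^ (2*m))) y := by
    refine hasDerivAt_tsum_of_isPreconnected (F := ℝ)
      (u := fun m : ℕ => (4 * (|y|+1) ^ 2) ^ m / (Nat.factorial m : ℝ))
      (g := fun (m : ℕ) (z : ℝ) => c m * z ^ (2*m+1))
      (g' := fun (m : ℕ) (z : ℝ) => c m * ((2*(m:ℝ)+1) * z ^ (2*m)))
      (summable_u (|y|+1)) Metric.isOpen_ball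
      ((convex_ball (0:ℝ) (|y|+1)).isPreconnected) (fun m z _ => ?_) (fun m z hz => ?_)
      h0mem ?_ hmem
    · have h := (hasDerivAt_pow (2*m+1) z).const_mul (c m)
      convert h using 1
      · rfl
      push_cast
      simp
    · refine term_bound m ?_
      have := hz
      rw [Metric.mem_ball, Real.dist_eq, sub_zero] at this
      exact this.le
    · simpa using summable_g_terms 0
  have heq : (∑' m : ℕ, c m * ((2*(m:ℝ)+1) * y ^ (2*m))) = 1 + 2 * y * g y := by
    have hcongr : ∀ m : ℕ, c m * ((2*(m:ℝ)+1) * y ^ (2*m)) = d m * y ^ (2*m) := by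
      intro m; rw [← c_mul m]; ring
    have hsum : Summable (fun m : ℕ => d m * y ^ (2*m)) := by
      have := summable_d_terms y
      simpa [hcongr] using this
    calc (∑' m : ℕ, c m * ((2*(m:ℝ)+1) * y ^ (2*m)))
        = ∑' m : ℕ, d m * y ^ (2*m) := tsum_congr hcongr
      _ = d 0 * y ^ (2*0) + ∑' m : ℕ, d (m+1) * y ^ (2*(m+1)) := hsum.tsum_eq_zero_add
      _ = 1 + ∑' m : ℕ, (2*y) * (c m * y ^ (2*m+1)) := by
          congr 1
          · simp [d, Nat.factorial]
          · apply tsum_congr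
            intro m
            rw [d_succ m]
            have h2e : 2*(m+1) = (2*m+1)+1 := by omega
            have : y ^ (2*(m+1)) = y ^ (2*m+1) * y := by
              rw [h2e, pow_succ]
            rw [this]; ring
      _ = 1 + 2 * y * g y := by
          rw [tsum_mul_left, g]
  rw [← heq]
  exact key

lemma g_eq (y : ℝ) : g y = Real.exp (y^2) * ∫ t in (0:ℝ)..y, Real.exp (-t^2) := by
  have key : ∀ z : ℝ, HasDerivAt (fun w => Real.exp (-w^2) * g w) (Real.exp (-z^2)) z := by
    intro z
    have h1 : HasDerivAt (fun w : ℝ => -w^2) (-(2*z)) z := by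
      simpa using (hasDerivAt_pow 2 z).fun_neg
    have h3 := h1.exp.fun_mul (g_hasDerivAt z)
    convert h3 using 1
    · rfl
    · rfl
    ring
  have hcont : Continuous (fun t : ℝ => Real.exp (-t^2)) := by
    continuity
  have hint := intervalIntegral.integral_eq_sub_of_hasDerivAt
    (f := fun w => Real.exp (-w^2) * g w) (fun t _ => key t)
    (hcont.intervalIntegrable 0 y)
  rw [hint]
  simp only [g_zero, mul_zero, sub_zero]
  rw [← mul_assoc, ← Real.exp_add]
  simp

/-- `Γ(m + 1/2) = √π (2m)! / (4^m m!)`. -/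
lemma Gamma_nat_add_half (m : ℕ) :
    Real.Gamma ((m : ℝ) + 1/2) =
      Real.sqrt Real.pi * (Nat.factorial (2*m) : ℝ) / (4 ^ m * (Nat.factorial m : ℝ)) := by
  induction m with
  | zero => simpa using Real.Gamma_one_half_eq
  | succ m ih =>
    have hne : ((m : ℝ) + 1/2) ≠ 0 := by positivity
    have h1 : ((m + 1 : ℕ) : ℝ) + 1/2 = ((m : ℝ) + 1/2) + 1 := by push_cast; ring
    rw [h1, Real.Gamma_add_one hne, ih]
    have h2 : 2 * (m + 1) = (2*m + 1) + 1 := by ring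
    rw [h2, Nat.factorial_succ ((2*m)+1), Nat.factorial_succ (2*m), Nat.factorial_succ m]
    have hf : (0:ℝ) < (Nat.factorial (2*m) : ℝ) := by positivity
    have hf2 : (0:ℝ) < (Nat.factorial m : ℝ) := by positivity
    push_cast
    field_simp
    ring

lemma exp_sub_one (y : ℝ) :
    ∑' m : ℕ, y ^ (m+1) / (Nat.factorial (m+1) : ℝ) = Real.exp y - 1 := by
  have hsum : Summable (fun n : ℕ => y ^ n / (Nat.factorial n : ℝ)) :=
    Real.summable_pow_div_factorial y
  have hexp : Real.exp y = ∑' n : ℕ, y ^ n / (Nat.factorial n : ℝ) := by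
    rw [Real.exp_eq_exp_ℝ, NormedSpace.exp_eq_tsum_div]
  rw [hexp, hsum.tsum_eq_zero_add]
  simp

end GammaErfAux

open GammaErfAux in
/-- The power-series identity
`∑_{n=2}^∞ Γ(n/2) xⁿ / (n−1)! = √π x (e^{x²/4}(1 + erf(x/2)) − 1)`
used in the proof of Theorem 3. -/
theorem gamma_series_erf_identity (x : ℝ) (hx : 0 ≤ x) :
    ∑' n : ℕ, Real.Gamma (((n : ℝ) + 2) / 2) * x ^ (n + 2) /
        (Nat.factorial (n + 1) : ℝ) =
      Real.sqrt Real.pi * x *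
        (Real.exp (x ^ 2 / 4) * (1 + erf (x / 2)) - 1) := by
  set f : ℕ → ℝ := fun n =>
    Real.Gamma (((n : ℝ) + 2) / 2) * x ^ (n + 2) / (Nat.factorial (n + 1) : ℝ) with hf
  have hEven : ∀ m : ℕ, f (2*m) = 2*x*(c m * (x/2)^(2*m+1)) := by
    intro m
    have hg : (((2*m : ℕ) : ℝ) + 2) / 2 = (m : ℝ) + 1 := by push_cast; ring
    have hpow : (4:ℝ)^m * 2 = 2 ^ (2*m+1) := by
      rw [pow_succ, pow_mul]; norm_num
    rw [hf]
    simp only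
    rw [hg, Real.Gamma_nat_eq_factorial, c]
    have h2 : ((x:ℝ)/2) ^ (2*m+1) = x ^ (2*m+1) / 2 ^ (2*m+1) := by
      rw [div_pow]
    rw [h2]
    have hfac : (0:ℝ) < (Nat.factorial (2*m+1) : ℝ) := by positivity
    have h2m : (0:ℝ) < (2:ℝ) ^ (2*m+1) := by positivity
    have hx2 : x ^ (2*m+2) = x * x ^ (2*m+1) := by
      rw [← pow_succ']
    rw [show 2*m+1+1 = 2*m+2 from rfl] at *
    field_simp
    rw [hx2, ← hpow]
    ring
  have hOdd : ∀ m : ℕ, f (2*m+1) =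
      (Real.sqrt Real.pi * x) * ((x^2/4)^(m+1) / (Nat.factorial (m+1) : ℝ)) := by
    intro m
    have hg : (((2*m+1 : ℕ) : ℝ) + 2) / 2 = ((m+1 : ℕ) : ℝ) + 1/2 := by push_cast; ring
    rw [hf]
    simp only
    rw [hg, GammaErfAux.Gamma_nat_add_half (m+1)]
    have h2 : 2*(m+1) = (2*m+1)+1 := by ring
    rw [h2]
    have hfac : (0:ℝ) < (Nat.factorial ((2*m+1)+1) : ℝ) := by positivity
    have hfacm : (0:ℝ) < (Nat.factorial (m+1) : ℝ) := by positivity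
    have hxp : (x^2/4)^(m+1) = x^(2*(m+1)) / 4^(m+1) := by
      rw [div_pow, pow_mul]
    rw [hxp]
    have hx3 : x ^ (2*m+1+2) = x * x^(2*(m+1)) := by
      have h3 : 2*m+1+2 = (2*(m+1))+1 := by omega
      rw [h3, pow_succ']
    rw [hx3]
    field_simp
    try ring
  have hse : Summable (fun m : ℕ => f (2*m)) := by
    have := (summable_g_terms (x/2)).mul_left (2*x)
    apply this.congr
    intro m
    rw [hEven m]
  have hso : Summable (fun m : ℕ => f (2*m+1)) := by
    have h0 : Summable (fun m : ℕ => (x^2/4)^(m+1) / (Nat.factorial (m+1) : ℝ)) :=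
      (Real.summable_pow_div_factorial (x^2/4)).comp_injective Nat.succ_injective
    have := h0.mul_left (Real.sqrt Real.pi * x)
    apply this.congr
    intro m
    rw [hOdd m]
  have hsplit : (∑' m : ℕ, f (2*m)) + (∑' m : ℕ, f (2*m+1)) = ∑' n : ℕ, f n :=
    tsum_even_add_odd hse hso
  have hEvenSum : (∑' m : ℕ, f (2*m)) =
      2*x*(Real.exp (x^2/4) * ∫ t in (0:ℝ)..(x/2), Real.exp (-t^2)) := by
    calc (∑' m : ℕ, f (2*m)) = ∑' m : ℕ, (2*x) * (c m * (x/2)^(2*m+1)) := by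
          apply tsum_congr
          intro m
          rw [hEven m]
      _ = (2*x) * g (x/2) := by rw [tsum_mul_left, g]
      _ = 2*x*(Real.exp (x^2/4) * ∫ t in (0:ℝ)..(x/2), Real.exp (-t^2)) := by
          rw [g_eq]
          have : ((x:ℝ)/2)^2 = x^2/4 := by ring
          rw [this]
  have hOddSum : (∑' m : ℕ, f (2*m+1)) =
      Real.sqrt Real.pi * x * (Real.exp (x^2/4) - 1) := by
    calc (∑' m : ℕ, f (2*m+1))
        = ∑' m : ℕ, (Real.sqrt Real.pi * x) * ((x^2/4)^(m+1) / (Nat.factorial (m+1) : ℝ)) :=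
          tsum_congr hOdd
      _ = (Real.sqrt Real.pi * x) * ∑' m : ℕ, (x^2/4)^(m+1) / (Nat.factorial (m+1) : ℝ) :=
          tsum_mul_left
      _ = Real.sqrt Real.pi * x * (Real.exp (x^2/4) - 1) := by
          rw [exp_sub_one]
  rw [← hsplit, hEvenSum, hOddSum, erf]
  have hs : Real.sqrt Real.pi ≠ 0 := by
    have := Real.pi_pos
    positivity
  field_simp
  ring
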